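/- Let T = (T_1,…,T_d) be a commuting d-tuple of operators on a Hilbert space H, and suppose w ∈ ℂ^d with ‖w‖ = 1 is a joint eigenvalue of T, with joint eigenspace H_w. If T is a K-contraction for a kernel whose coefficient sequence (b_n) satisfies b_1 > 0 and ∑_{n=1}^∞ b_n = 1, then H_w is a reducing subspace for T on which each T_j acts as the scalar w_j. (In particular T restricted to H_w is a spherical unitary.) -/

import Mathlib

/-!
STATEMENT 1: If T is a commuting K-contraction (for a coefficient sequence with
b_1 > 0 and ∑_{n≥1} b_n = 1) and w is a unit vector in ℂ^d that is a joint
eigenvalue of T, then the joint eigenspace H_w reduces T and each T_j acts on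
it as the scalar w_j; equivalently the adjoint T_j* acts on H_w as conj(w_j).
(The latter implies that H_w and its orthogonal complement are invariant for
all T_j, and that T restricted to H_w is the spherical unitary w·I.)
-/

noncomputable section

open scoped BigOperators

/-- `T^α = T_1^{α_1} ⋯ T_d^{α_d}`. -/
def opPow {H : Type*} [NormedAddCommGroup H] [NormedSpace ℂ H] {d : ℕ}
    (T : Fin d → (H →L[ℂ] H)) (α : Fin d → ℕ) : H →L[ℂ] H :=
  (List.ofFn fun j => (T j) ^ (α j)).prod

/-- Product of a list `ofFn g` applied to a common eigenvector. -/
lemma listProd_ofFn_apply {H : Type*} [NormedAddCommGroup H] [NormedSpace ℂ H] :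
    ∀ {d : ℕ} (g : Fin d → (H →L[ℂ] H)) (c : Fin d → ℂ) (x : H),
      (∀ i, g i x = c i • x) → (List.ofFn g).prod x = (∏ i, c i) • x
  | 0, g, c, x, _ => by simp
  | (d+1), g, c, x, h => by
    rw [List.ofFn_succ, List.prod_cons, ContinuousLinearMap.mul_apply,
      listProd_ofFn_apply (fun i => g i.succ) (fun i => c i.succ) x (fun i => h i.succ),
      map_smul, h 0, Fin.prod_univ_succ, smul_smul, mul_comm]

/-- Product of a list `ofFn g` when all but one entry is `1`. -/
lemma listProd_ofFn_single {M : Type*} [Monoid M] :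
    ∀ {d : ℕ} (g : Fin d → M) (j : Fin d), (∀ i, i ≠ j → g i = 1) →
      (List.ofFn g).prod = g j
  | 0, _, j, _ => j.elim0
  | (d+1), g, j, h => by
    rw [List.ofFn_succ, List.prod_cons]
    rcases Fin.eq_zero_or_eq_succ j with rfl | ⟨k, rfl⟩
    · have h1 : (List.ofFn fun i : Fin d => g i.succ).prod = 1 := by
        apply List.prod_eq_one
        intro a ha
        rw [List.mem_ofFn] at ha
        obtain ⟨i, rfl⟩ := ha
        exact h i.succ (Fin.succ_ne_zero i)
      rw [h1, mul_one]
    · rw [h 0 (Ne.symm (Fin.succ_ne_zero k)), one_mul,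
        listProd_ofFn_single (fun i => g i.succ) k
          (fun i hi => h i.succ (by simpa [Fin.succ_inj] using hi))]

lemma pow_apply_eigen {H : Type*} [NormedAddCommGroup H] [NormedSpace ℂ H]
    (A : H →L[ℂ] H) (c : ℂ) (x : H) (h : A x = c • x) :
    ∀ k : ℕ, (A ^ k) x = c ^ k • x := by
  intro k
  induction k with
  | zero => simp
  | succ k ih =>
    rw [pow_succ, ContinuousLinearMap.mul_apply, h, map_smul, ih, smul_smul, pow_succ]
    ring_nf

lemma opPow_apply_eigen {H : Type*} [NormedAddCommGroup H] [NormedSpace ℂ H] {d : ℕ}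
    (T : Fin d → (H →L[ℂ] H)) (α : Fin d → ℕ) (wc : Fin d → ℂ) (x : H)
    (h : ∀ j, T j x = wc j • x) :
    opPow T α x = (∏ i, wc i ^ α i) • x :=
  listProd_ofFn_apply _ _ x (fun i => pow_apply_eigen (T i) (wc i) x (h i) (α i))

lemma opPow_single {H : Type*} [NormedAddCommGroup H] [NormedSpace ℂ H] {d : ℕ}
    (T : Fin d → (H →L[ℂ] H)) (j : Fin d) :
    opPow T (Pi.single j 1) = T j := by
  have h := listProd_ofFn_single (fun i => T i ^ (Pi.single (M := fun _ => ℕ) j 1 i)) j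
    (fun i hi => by simp [Pi.single_eq_of_ne hi])
  simpa [opPow, Pi.single_eq_same] using h

/-- Cauchy–Schwarz lower bound for the adjoint on an eigenvector. -/
lemma adjoint_norm_sq_lb {H : Type*} [NormedAddCommGroup H] [InnerProductSpace ℂ H]
    [CompleteSpace H] (A : H →L[ℂ] H) (c : ℂ) (x : H) (h : A x = c • x) :
    ‖c‖ ^ 2 * ‖x‖ ^ 2 ≤ ‖ContinuousLinearMap.adjoint A x‖ ^ 2 := by
  have h1 : ‖(inner ℂ (ContinuousLinearMap.adjoint A x) x : ℂ)‖ = ‖c‖ * ‖x‖ ^ 2 := by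
    rw [ContinuousLinearMap.adjoint_inner_left, h, inner_smul_right]
    rw [norm_mul, @inner_self_eq_norm_sq_to_K ℂ]
    simp [norm_pow]
  have h2 : ‖(inner ℂ (ContinuousLinearMap.adjoint A x) x : ℂ)‖
      ≤ ‖ContinuousLinearMap.adjoint A x‖ * ‖x‖ := norm_inner_le_norm _ _
  rw [h1] at h2
  nlinarith [norm_nonneg x, norm_nonneg c, norm_nonneg (ContinuousLinearMap.adjoint A x),
    mul_le_mul_of_nonneg_left h2 (norm_nonneg c)]

theorem joint_eigenspace_reduces_K_contraction
    {d : ℕ} {H : Type*} [NormedAddCommGroup H] [InnerProductSpace ℂ H] [CompleteSpace H]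
    (T : Fin d → (H →L[ℂ] H))
    (hcomm : ∀ i j, T i * T j = T j * T i)
    (b : ℕ → ℝ) (hb : ∀ n, 0 ≤ b n) (hb1 : 0 < b 1)
    (hmax : HasSum (fun n : ℕ => b (n + 1)) 1)
    -- T is a K-contraction: ∑_{n≥1} b_n ∑_{|α|=n} (n!/α!) T^α T^{*α} ≤ I,
    -- expressed via quadratic forms and partial sums:
    (hK : ∀ (x : H) (N : ℕ),
      ∑ n ∈ Finset.range N, b (n + 1) *
        ∑ α ∈ Finset.Nat.antidiagonalTuple d (n + 1),
          (((n + 1).factorial : ℝ) / ∏ j, ((α j).factorial : ℝ)) *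
            ‖ContinuousLinearMap.adjoint (opPow T α) x‖ ^ 2
      ≤ ‖x‖ ^ 2)
    (w : EuclideanSpace ℂ (Fin d)) (hw : ‖w‖ = 1)
    -- w is a joint eigenvalue:
    (hev : ∃ x : H, x ≠ 0 ∧ ∀ j, T j x = w j • x) :
    ∀ x : H, (∀ j, T j x = w j • x) →
      ∀ j, ContinuousLinearMap.adjoint (T j) x = (starRingEnd ℂ) (w j) • x := by
  intro x hx j
  classical
  set c : Fin d → ℝ := fun i => ‖w i‖ ^ 2 with hc
  -- ∑ c = 1
  have hsum_c : ∑ i, c i = 1 := by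
    have hnn : (0:ℝ) ≤ ∑ i, ‖w i‖ ^ 2 :=
      Finset.sum_nonneg fun i _ => sq_nonneg _
    have hsq : Real.sqrt (∑ i, ‖w i‖ ^ 2) = 1 := by
      rw [← EuclideanSpace.norm_eq, hw]
    have := Real.sq_sqrt hnn
    rw [hsq] at this
    simpa [hc] using this.symm
  -- multinomial identity
  have hmult : ∀ m : ℕ, ∑ α ∈ Finset.Nat.antidiagonalTuple d m,
      ((m.factorial : ℝ) / ∏ i, ((α i).factorial : ℝ)) * ∏ i, c i ^ α i = 1 := by
    intro m
    have h1 := Finset.sum_pow_eq_sum_piAntidiag (Finset.univ : Finset (Fin d)) c m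
    rw [Finset.piAntidiag_univ_fin_eq_antidiagonalTuple, hsum_c, one_pow] at h1
    conv_rhs => rw [h1]
    refine Finset.sum_congr rfl fun α hα => ?_
    have hαs : ∑ i, α i = m := Finset.Nat.mem_antidiagonalTuple.mp hα
    have hspec := Nat.multinomial_spec (Finset.univ : Finset (Fin d)) α
    rw [hαs] at hspec
    have hne : (∏ i, ((α i).factorial : ℝ)) ≠ 0 := by positivity
    have hco : ((m.factorial : ℝ) / ∏ i, ((α i).factorial : ℝ))
        = (Nat.multinomial Finset.univ α : ℝ) := by
      rw [div_eq_iff hne, mul_comm]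
      exact_mod_cast hspec.symm
    rw [hco]
  -- lower bound on the level-m sums
  set S : ℕ → ℝ := fun m => ∑ α ∈ Finset.Nat.antidiagonalTuple d m,
      ((m.factorial : ℝ) / ∏ i, ((α i).factorial : ℝ)) *
        ‖ContinuousLinearMap.adjoint (opPow T α) x‖ ^ 2 with hS
  have hterm_lb : ∀ (m : ℕ), ∀ α ∈ Finset.Nat.antidiagonalTuple d m,
      ((m.factorial : ℝ) / ∏ i, ((α i).factorial : ℝ)) * ((∏ i, c i ^ α i) * ‖x‖ ^ 2)
      ≤ ((m.factorial : ℝ) / ∏ i, ((α i).factorial : ℝ)) *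
          ‖ContinuousLinearMap.adjoint (opPow T α) x‖ ^ 2 := by
    intro m α _
    have h1 : opPow T α x = (∏ i, w i ^ α i) • x := opPow_apply_eigen T α _ x hx
    have h2 := adjoint_norm_sq_lb (opPow T α) _ x h1
    have h3 : ‖∏ i, w i ^ α i‖ ^ 2 = ∏ i, c i ^ α i := by
      rw [norm_prod, ← Finset.prod_pow]
      exact Finset.prod_congr rfl fun i _ => by
        rw [norm_pow, ← pow_mul, ← pow_mul, mul_comm]
    have hcoef : (0:ℝ) ≤ (m.factorial : ℝ) / ∏ i, ((α i).factorial : ℝ) := by positivity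
    have := mul_le_mul_of_nonneg_left (h3 ▸ h2) hcoef
    linarith
  have hS_lb : ∀ m, ‖x‖ ^ 2 ≤ S m := by
    intro m
    have h0 : ∑ α ∈ Finset.Nat.antidiagonalTuple d m,
        ((m.factorial : ℝ) / ∏ i, ((α i).factorial : ℝ)) * ((∏ i, c i ^ α i) * ‖x‖ ^ 2)
        = ‖x‖ ^ 2 := by
      have h1 : ∑ α ∈ Finset.Nat.antidiagonalTuple d m,
          ((m.factorial : ℝ) / ∏ i, ((α i).factorial : ℝ)) * ((∏ i, c i ^ α i) * ‖x‖ ^ 2)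
          = (∑ α ∈ Finset.Nat.antidiagonalTuple d m,
              ((m.factorial : ℝ) / ∏ i, ((α i).factorial : ℝ)) * ∏ i, c i ^ α i) * ‖x‖ ^ 2 := by
        rw [Finset.sum_mul]
        exact Finset.sum_congr rfl fun α _ => by ring
      rw [h1, hmult m, one_mul]
    calc ‖x‖ ^ 2 = _ := h0.symm
      _ ≤ S m := Finset.sum_le_sum (hterm_lb m)
  -- upper bound S 1 ≤ ‖x‖²
  have hS1_ub : S 1 ≤ ‖x‖ ^ 2 := by
    have hstep : ∀ N : ℕ, b 1 * S 1 + (∑ i ∈ Finset.range N, b (i + 2)) * ‖x‖ ^ 2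
        ≤ ‖x‖ ^ 2 := by
      intro N
      have h := hK x (N + 1)
      rw [Finset.sum_range_succ'] at h
      have h2 : (∑ i ∈ Finset.range N, b (i + 2)) * ‖x‖ ^ 2
          ≤ ∑ i ∈ Finset.range N, b (i + 1 + 1) * S (i + 1 + 1) := by
        rw [Finset.sum_mul]
        exact Finset.sum_le_sum fun i _ =>
          mul_le_mul_of_nonneg_left (hS_lb (i + 2)) (hb _)
      simp only [hS] at h2 ⊢
      linarith
    have h2 : HasSum (fun n : ℕ => b (n + 2)) (1 - b 1) := by
      have := (hasSum_nat_add_iff' (f := fun n : ℕ => b (n + 1)) 1).mpr hmax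
      simpa using this
    have h3 : Filter.Tendsto (fun N => ∑ i ∈ Finset.range N, b (i + 2))
        Filter.atTop (nhds (1 - b 1)) := h2.tendsto_sum_nat
    have h4 : Filter.Tendsto
        (fun N => ‖x‖ ^ 2 - (∑ i ∈ Finset.range N, b (i + 2)) * ‖x‖ ^ 2)
        Filter.atTop (nhds (‖x‖ ^ 2 - (1 - b 1) * ‖x‖ ^ 2)) :=
      tendsto_const_nhds.sub (h3.mul tendsto_const_nhds)
    have h5 : b 1 * S 1 ≤ ‖x‖ ^ 2 - (1 - b 1) * ‖x‖ ^ 2 :=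
      ge_of_tendsto' h4 fun N => by linarith [hstep N]
    have h6 : b 1 * S 1 ≤ b 1 * ‖x‖ ^ 2 := by nlinarith
    exact le_of_mul_le_mul_left h6 hb1
  -- equality of each term at level 1
  have hSeq : S 1 = ‖x‖ ^ 2 := le_antisymm hS1_ub (hS_lb 1)
  have hsum_eq : ∑ α ∈ Finset.Nat.antidiagonalTuple d 1,
      (((1:ℕ).factorial : ℝ) / ∏ i, ((α i).factorial : ℝ)) * ((∏ i, c i ^ α i) * ‖x‖ ^ 2)
      = S 1 := by
    have h1 : ∑ α ∈ Finset.Nat.antidiagonalTuple d 1,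
        (((1:ℕ).factorial : ℝ) / ∏ i, ((α i).factorial : ℝ)) * ((∏ i, c i ^ α i) * ‖x‖ ^ 2)
        = (∑ α ∈ Finset.Nat.antidiagonalTuple d 1,
            (((1:ℕ).factorial : ℝ) / ∏ i, ((α i).factorial : ℝ)) * ∏ i, c i ^ α i) * ‖x‖ ^ 2 := by
      rw [Finset.sum_mul]
      exact Finset.sum_congr rfl fun α _ => by ring
    rw [h1, hmult 1, one_mul, hSeq]
  have hall := (Finset.sum_eq_sum_iff_of_le (hterm_lb 1)).mp hsum_eq
  have hmem : (Pi.single j 1 : Fin d → ℕ) ∈ Finset.Nat.antidiagonalTuple d 1 := by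
    rw [Finset.Nat.mem_antidiagonalTuple]
    simp [Finset.sum_pi_single']
  have heqj := hall _ hmem
  have hfac : (∏ i, (((Pi.single j 1 : Fin d → ℕ) i).factorial : ℝ)) = 1 := by
    apply Finset.prod_eq_one
    intro i _
    by_cases hij : i = j
    · subst hij; simp [Pi.single_eq_same]
    · simp [Pi.single_eq_of_ne hij]
  have hcprod : (∏ i, c i ^ (Pi.single j 1 : Fin d → ℕ) i) = c j := by
    rw [Finset.prod_eq_single j]
    · simp [Pi.single_eq_same]
    · intro i _ hij; simp [Pi.single_eq_of_ne hij]
    · intro hj; exact absurd (Finset.mem_univ j) hj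
  rw [hfac, hcprod, opPow_single T j] at heqj
  simp only [Nat.factorial_one, Nat.cast_one, div_one, one_mul] at heqj
  -- heqj : c j * ‖x‖ ^ 2 = ‖(T j)† x‖ ^ 2
  have hnormsq : ‖ContinuousLinearMap.adjoint (T j) x‖ ^ 2 = ‖w j‖ ^ 2 * ‖x‖ ^ 2 := by
    rw [← heqj]
  -- conclude
  have hinner : (inner ℂ (ContinuousLinearMap.adjoint (T j) x)
      ((starRingEnd ℂ) (w j) • x) : ℂ) = ((‖w j‖ ^ 2 * ‖x‖ ^ 2 : ℝ) : ℂ) := by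
    rw [inner_smul_right, ContinuousLinearMap.adjoint_inner_left, hx j, inner_smul_right,
      @inner_self_eq_norm_sq_to_K ℂ]
    calc (starRingEnd ℂ) (w j) * (w j * (‖x‖ : ℂ) ^ 2)
        = (w j * (starRingEnd ℂ) (w j)) * (‖x‖ : ℂ) ^ 2 := by ring
      _ = (Complex.normSq (w j) : ℂ) * (‖x‖ : ℂ) ^ 2 := by rw [Complex.mul_conj]
      _ = ((‖w j‖ ^ 2 * ‖x‖ ^ 2 : ℝ) : ℂ) := by
          rw [Complex.normSq_eq_norm_sq]
          push_cast
          ring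
  have hzero : ‖ContinuousLinearMap.adjoint (T j) x - (starRingEnd ℂ) (w j) • x‖ ^ 2 = 0 := by
    rw [norm_sub_sq (𝕜 := ℂ), hinner, hnormsq, norm_smul, RCLike.norm_conj]
    simp only [RCLike.re_to_complex, ← Complex.ofReal_mul, Complex.ofReal_re]
    ring
  have := pow_eq_zero_iff (n := 2) (by norm_num) |>.mp hzero
  rw [norm_eq_zero, sub_eq_zero] at this
  exact this

end
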